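/- The operator P = Σ_{j=1}^p f_{2j} f_{2j-1} satisfies the commutation relations [P, ∂_z] = -∂_z^J, [P, ∂_z†] = 0, [P, ∂_z^J] = 0 and [P, ∂_z†^J] = ∂_z†, where ∂_z = Σ_k ∂_{z_k} f_k†, ∂_z† = Σ_k ∂_{z̄_k} f_k, ∂_z^J = Σ_{j=1}^p (∂_{z_{2j}} f_{2j-1} - ∂_{z_{2j-1}} f_{2j}) and ∂_z†^J = Σ_{j=1}^p (∂_{z̄_{2j}} f†_{2j-1} - ∂_{z̄_{2j-1}} f†_{2j}). -/

import Mathlib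

open MvPolynomial TensorProduct

/-- Variables: `Sum.inl j` is `z_{j+1}`, `Sum.inr j` is `z̄_{j+1}` (0-indexed). -/
abbrev HVar (p : ℕ) := Fin (2*p) ⊕ Fin (2*p)

abbrev HPol (p : ℕ) := MvPolynomial (HVar p) ℂ

def idx0 {p : ℕ} (k : Fin p) : Fin (2*p) := ⟨2*k.1, by have := k.2; omega⟩
def idx1 {p : ℕ} (k : Fin p) : Fin (2*p) := ⟨2*k.1+1, by have := k.2; omega⟩

variable (p : ℕ) (A : Type*) [Ring A] [Algebra ℂ A]

/-- The (Wirtinger) partial derivative `∂_v`, acting on `A`-valued polynomials. -/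
noncomputable def Dop (v : HVar p) : Module.End ℂ (HPol p ⊗[ℂ] A) :=
  LinearMap.rTensor A (MvPolynomial.pderiv v).toLinearMap

/-- Left Clifford multiplication by `a : A` on `A`-valued polynomials. -/
noncomputable def mulF (a : A) : Module.End ℂ (HPol p ⊗[ℂ] A) :=
  LinearMap.lTensor (HPol p) (LinearMap.mulLeft ℂ a)

/-- Multiplication by the scalar polynomial `q` on `A`-valued polynomials. -/
noncomputable def mulP (q : HPol p) : Module.End ℂ (HPol p ⊗[ℂ] A) :=
  LinearMap.rTensor A (LinearMap.mulLeft ℂ q)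

/-- The hermitian Dirac operator `∂_z = Σ_k f_k† ∂_{z_k}`. -/
noncomputable def dz (fd : Fin (2*p) → A) : Module.End ℂ (HPol p ⊗[ℂ] A) :=
  ∑ k : Fin (2*p), mulF p A (fd k) * Dop p A (Sum.inl k)

/-- The hermitian Dirac operator `∂_z† = Σ_k f_k ∂_{z̄_k}`. -/
noncomputable def dzd (f : Fin (2*p) → A) : Module.End ℂ (HPol p ⊗[ℂ] A) :=
  ∑ k : Fin (2*p), mulF p A (f k) * Dop p A (Sum.inr k)

/-- The rotated Dirac operator `∂_z^J = Σ_j (∂_{z_{2j}} f_{2j-1} - ∂_{z_{2j-1}} f_{2j})`. -/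
noncomputable def dzJ (f : Fin (2*p) → A) : Module.End ℂ (HPol p ⊗[ℂ] A) :=
  ∑ j : Fin p, (mulF p A (f (idx0 j)) * Dop p A (Sum.inl (idx1 j))
    - mulF p A (f (idx1 j)) * Dop p A (Sum.inl (idx0 j)))

/-- The rotated Dirac operator `∂_z†^J = Σ_j (∂_{z̄_{2j}} f†_{2j-1} - ∂_{z̄_{2j-1}} f†_{2j})`. -/
noncomputable def dzdJ (fd : Fin (2*p) → A) : Module.End ℂ (HPol p ⊗[ℂ] A) :=
  ∑ j : Fin p, (mulF p A (fd (idx0 j)) * Dop p A (Sum.inr (idx1 j))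
    - mulF p A (fd (idx1 j)) * Dop p A (Sum.inr (idx0 j)))

section Aux

lemma idx0_eq_iff {p : ℕ} (a b : Fin p) : (idx0 a = idx0 b) ↔ a = b := by
  simp only [idx0, Fin.mk.injEq, Fin.ext_iff]; omega

lemma idx1_eq_iff {p : ℕ} (a b : Fin p) : (idx1 a = idx1 b) ↔ a = b := by
  simp only [idx1, Fin.mk.injEq, Fin.ext_iff]; omega

lemma idx1_ne_idx0 {p : ℕ} (a b : Fin p) : idx1 a ≠ idx0 b := by
  simp only [idx0, idx1, ne_eq, Fin.mk.injEq]; omega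

lemma idx0_ne_idx1 {p : ℕ} (a b : Fin p) : idx0 a ≠ idx1 b := by
  simp only [idx0, idx1, ne_eq, Fin.mk.injEq]; omega

/-- The equivalence `Fin p × Fin 2 ≃ Fin (2*p)` sending `(a, b)` to `2*a + b`. -/
def pairEquiv (p : ℕ) : Fin p × Fin 2 ≃ Fin (2*p) where
  toFun x := ⟨2*x.1.1 + x.2.1, by have := x.1.2; have := x.2.2; omega⟩
  invFun k := (⟨k.1/2, by have := k.2; omega⟩, ⟨k.1 % 2, by omega⟩)
  left_inv := fun ⟨⟨a, ha⟩, ⟨b, hb⟩⟩ => by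
    simp only [Prod.mk.injEq, Fin.mk.injEq]
    omega
  right_inv := fun ⟨k, hk⟩ => by
    simp only [Fin.mk.injEq]
    omega

lemma sum_split {M : Type*} [AddCommMonoid M] (p : ℕ) (g : Fin (2*p) → M) :
    ∑ k : Fin (2*p), g k = ∑ j : Fin p, (g (idx0 j) + g (idx1 j)) := by
  rw [← Equiv.sum_comp (pairEquiv p) g, Fintype.sum_prod_type]
  refine Finset.sum_congr rfl fun j _ => ?_
  rw [Fin.sum_univ_two]
  have h0 : pairEquiv p (j, 0) = idx0 j := by
    simp only [pairEquiv, Equiv.coe_fn_mk, idx0, Fin.mk.injEq, Fin.val_zero]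
    omega
  have h1 : pairEquiv p (j, 1) = idx1 j := by
    simp only [pairEquiv, Equiv.coe_fn_mk, idx1, Fin.mk.injEq, Fin.val_one]
  rw [h0, h1]

lemma clif_aux {A : Type*} [Ring A] (a b c da db : A)
    (ha : c * a = da - a * c) (hb : c * b = db - b * c) (hda : da * b = b * da) :
    b * a * c - c * (b * a) = da * b - db * a := by
  have h1 : c * (b * a) = (db - b * c) * a := by rw [← mul_assoc, hb]
  rw [mul_assoc b a c, h1, sub_mul, mul_assoc b c a, ha, mul_sub, ← hda]
  abel

variable (p : ℕ) (A : Type*) [Ring A] [Algebra ℂ A]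

lemma mulF_mul (a b : A) : mulF p A (a * b) = mulF p A a * mulF p A b := by
  simp only [mulF, LinearMap.mulLeft_mul, LinearMap.lTensor_comp, Module.End.mul_eq_comp]

lemma mulF_add (a b : A) : mulF p A (a + b) = mulF p A a + mulF p A b := by
  have h : LinearMap.mulLeft ℂ (a + b) = LinearMap.mulLeft ℂ a + LinearMap.mulLeft ℂ b :=
    LinearMap.ext fun x => add_mul a b x
  simp only [mulF, h, LinearMap.lTensor_add]

lemma mulF_zero : mulF p A 0 = 0 := by
  simp only [mulF, LinearMap.mulLeft_zero_eq_zero, LinearMap.lTensor_zero]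

lemma mulF_sub (a b : A) : mulF p A (a - b) = mulF p A a - mulF p A b := by
  have h : LinearMap.mulLeft ℂ (a - b) = LinearMap.mulLeft ℂ a - LinearMap.mulLeft ℂ b :=
    LinearMap.ext fun x => sub_mul a b x
  simp only [mulF, h, LinearMap.lTensor_sub]

lemma mulF_neg (a : A) : mulF p A (-a) = -(mulF p A a) := by
  have h2 : mulF p A (-a) + mulF p A a = 0 := by
    rw [← mulF_add, neg_add_cancel, mulF_zero]
  have h3 : mulF p A (-a) = 0 - mulF p A a := by rw [← h2]; abel
  rw [h3]; abel

lemma mulF_sum {ι : Type*} (s : Finset ι) (g : ι → A) :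
    mulF p A (∑ i ∈ s, g i) = ∑ i ∈ s, mulF p A (g i) := by
  classical
  induction s using Finset.induction_on with
  | empty => simp [mulF_zero]
  | insert _ _ h ih => rw [Finset.sum_insert h, Finset.sum_insert h, mulF_add, ih]

lemma Dop_mulF (v : HVar p) (a : A) :
    Dop p A v * mulF p A a = mulF p A a * Dop p A v := by
  simp only [Dop, mulF, Module.End.mul_eq_comp, LinearMap.rTensor_comp_lTensor,
    LinearMap.lTensor_comp_rTensor]

lemma sumE_sub {ι : Type*} (s : Finset ι) (F G : ι → Module.End ℂ (HPol p ⊗[ℂ] A)) :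
    ∑ i ∈ s, (F i - G i) = ∑ i ∈ s, F i - ∑ i ∈ s, G i := by
  classical
  induction s using Finset.induction_on with
  | empty => simp only [Finset.sum_empty]; abel
  | insert _ _ h ih =>
    rw [Finset.sum_insert h, Finset.sum_insert h, Finset.sum_insert h, ih]; abel

lemma sumE_neg {ι : Type*} (s : Finset ι) (F : ι → Module.End ℂ (HPol p ⊗[ℂ] A)) :
    ∑ i ∈ s, -(F i) = -∑ i ∈ s, F i := by
  classical
  induction s using Finset.induction_on with
  | empty => simp only [Finset.sum_empty]; abel
  | insert _ _ h ih =>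
    rw [Finset.sum_insert h, Finset.sum_insert h, ih]; abel

lemma zeroE_mul (Y : Module.End ℂ (HPol p ⊗[ℂ] A)) : (0 : Module.End ℂ (HPol p ⊗[ℂ] A)) * Y = 0 :=
  LinearMap.ext fun v => by simp [Module.End.mul_apply]

lemma negE_mul (X Y : Module.End ℂ (HPol p ⊗[ℂ] A)) : (-X) * Y = -(X * Y) :=
  LinearMap.ext fun v => by simp [Module.End.mul_apply]

lemma subE_negE (X Y : Module.End ℂ (HPol p ⊗[ℂ] A)) : X - -Y = X + Y := by abel

lemma comm_term (Pa c : A) (v : HVar p) :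
    mulF p A Pa * (mulF p A c * Dop p A v) - (mulF p A c * Dop p A v) * mulF p A Pa
      = mulF p A (Pa * c - c * Pa) * Dop p A v := by
  have h1 : mulF p A Pa * (mulF p A c * Dop p A v) = mulF p A (Pa * c) * Dop p A v := by
    rw [mulF_mul, mul_assoc (mulF p A Pa) (mulF p A c) (Dop p A v)]
  have h2 : (mulF p A c * Dop p A v) * mulF p A Pa = mulF p A (c * Pa) * Dop p A v := by
    rw [mul_assoc (mulF p A c) (Dop p A v) (mulF p A Pa), Dop_mulF,
      ← mul_assoc (mulF p A c) (mulF p A Pa) (Dop p A v), ← mulF_mul]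
  rw [h1, h2, mulF_sub, sub_mul (mulF p A (Pa * c)) (mulF p A (c * Pa)) (Dop p A v)]

end Aux

/-- `[P, ∂_z] = -∂_z^J`, `[P, ∂_z†] = 0`, `[P, ∂_z^J] = 0`, `[P, ∂_z†^J] = ∂_z†`. -/
theorem P_dirac_commutators
    (f fd : Fin (2*p) → A)
    (hff : ∀ j k, f j * f k + f k * f j = 0)
    (hdd : ∀ j k, fd j * fd k + fd k * fd j = 0)
    (hfd : ∀ j k, f j * fd k + fd k * f j = if j = k then 1 else 0) :
    let P : Module.End ℂ (HPol p ⊗[ℂ] A) := mulF p A (∑ j : Fin p, f (idx1 j) * f (idx0 j))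
    P * dz p A fd - dz p A fd * P = -(dzJ p A f) ∧
    P * dzd p A f - dzd p A f * P = 0 ∧
    P * dzJ p A f - dzJ p A f * P = 0 ∧
    P * dzdJ p A fd - dzdJ p A fd * P = dzd p A f := by
  intro P
  classical
  obtain ⟨Pa, hPa, hPdef⟩ :
      ∃ Pa : A, Pa = ∑ j : Fin p, f (idx1 j) * f (idx0 j) ∧ P = mulF p A Pa :=
    ⟨_, rfl, rfl⟩
  have hfd' : ∀ (a k : Fin (2*p)), fd k * f a = (if a = k then (1:A) else 0) - f a * fd k :=
    fun a k => eq_sub_iff_add_eq.mpr (by rw [add_comm]; exact hfd a k)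
  have hff' : ∀ (a k : Fin (2*p)), f k * f a = 0 - f a * f k :=
    fun a k => eq_sub_iff_add_eq.mpr (hff k a)
  have key_fd : ∀ k : Fin (2*p), Pa * fd k - fd k * Pa
      = ∑ j : Fin p, ((if idx0 j = k then f (idx1 j) else 0)
          - (if idx1 j = k then f (idx0 j) else 0)) := by
    intro k
    rw [hPa, Finset.sum_mul, Finset.mul_sum, ← Finset.sum_sub_distrib]
    refine Finset.sum_congr rfl fun j _ => ?_
    have h := clif_aux (f (idx0 j)) (f (idx1 j)) (fd k)
      (if idx0 j = k then (1:A) else 0) (if idx1 j = k then (1:A) else 0)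
      (hfd' _ _) (hfd' _ _) (by split_ifs <;> simp)
    rw [h, ite_mul, ite_mul, one_mul, one_mul, zero_mul, zero_mul]
  have key_f : ∀ k : Fin (2*p), Pa * f k - f k * Pa = 0 := by
    intro k
    rw [hPa, Finset.sum_mul, Finset.mul_sum, ← Finset.sum_sub_distrib]
    refine Finset.sum_eq_zero fun j _ => ?_
    have h := clif_aux (f (idx0 j)) (f (idx1 j)) (f k) 0 0 (hff' _ _) (hff' _ _) (by simp)
    rw [h, zero_mul, zero_mul, sub_zero]
  have key0 : ∀ j : Fin p, Pa * fd (idx0 j) - fd (idx0 j) * Pa = f (idx1 j) := by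
    intro j
    rw [key_fd]
    rw [show (∑ j' : Fin p, ((if idx0 j' = idx0 j then f (idx1 j') else 0)
          - (if idx1 j' = idx0 j then f (idx0 j') else 0)))
        = ∑ j' : Fin p, (if j' = j then f (idx1 j') else 0) from
      Finset.sum_congr rfl fun j' _ => by
        rw [if_neg (idx1_ne_idx0 j' j), sub_zero, if_congr (idx0_eq_iff j' j) rfl rfl]]
    simp
  have key1 : ∀ j : Fin p, Pa * fd (idx1 j) - fd (idx1 j) * Pa = -f (idx0 j) := by
    intro j
    rw [key_fd]
    rw [show (∑ j' : Fin p, ((if idx0 j' = idx1 j then f (idx1 j') else 0)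
          - (if idx1 j' = idx1 j then f (idx0 j') else 0)))
        = ∑ j' : Fin p, -(if j' = j then f (idx0 j') else 0) from
      Finset.sum_congr rfl fun j' _ => by
        rw [if_neg (idx0_ne_idx1 j' j), zero_sub, if_congr (idx1_eq_iff j' j) rfl rfl]]
    simp
  have expand : ∀ X Y Q : Module.End ℂ (HPol p ⊗[ℂ] A),
      Q * (X - Y) - (X - Y) * Q = (Q * X - X * Q) - (Q * Y - Y * Q) := by
    intro X Y Q; rw [mul_sub Q X Y, sub_mul X Y Q]; abel
  refine ⟨?_, ?_, ?_, ?_⟩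
  · -- [P, ∂_z] = -∂_z^J
    rw [hPdef, dz, Finset.mul_sum, Finset.sum_mul, ← sumE_sub p A]
    have e1 : ∀ k : Fin (2*p), mulF p A Pa * (mulF p A (fd k) * Dop p A (Sum.inl k))
        - (mulF p A (fd k) * Dop p A (Sum.inl k)) * mulF p A Pa
        = ∑ j : Fin p, ((if idx0 j = k then mulF p A (f (idx1 j)) * Dop p A (Sum.inl k) else 0)
            - (if idx1 j = k then mulF p A (f (idx0 j)) * Dop p A (Sum.inl k) else 0)) := by
      intro k
      rw [comm_term, key_fd, mulF_sum, Finset.sum_mul]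
      refine Finset.sum_congr rfl fun j _ => ?_
      rw [mulF_sub, apply_ite (mulF p A), apply_ite (mulF p A), mulF_zero,
        sub_mul (if idx0 j = k then mulF p A (f (idx1 j)) else 0)
          (if idx1 j = k then mulF p A (f (idx0 j)) else 0) (Dop p A (Sum.inl k)),
        ite_mul, ite_mul, zeroE_mul p A (Dop p A (Sum.inl k))]
    simp only [e1]
    rw [Finset.sum_comm]
    simp only [sumE_sub p A, Finset.sum_ite_eq, Finset.mem_univ, if_true]
    rw [dzJ]
    rw [show -∑ j : Fin p, (mulF p A (f (idx0 j)) * Dop p A (Sum.inl (idx1 j))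
          - mulF p A (f (idx1 j)) * Dop p A (Sum.inl (idx0 j)))
        = ∑ j : Fin p, -(mulF p A (f (idx0 j)) * Dop p A (Sum.inl (idx1 j))
          - mulF p A (f (idx1 j)) * Dop p A (Sum.inl (idx0 j))) from
      (sumE_neg p A Finset.univ _).symm]
    exact ((sumE_sub p A Finset.univ _ _).symm).trans
      (Finset.sum_congr rfl fun j _ => by abel)
  · -- [P, ∂_z†] = 0
    rw [hPdef, dzd, Finset.mul_sum, Finset.sum_mul, ← sumE_sub p A]
    refine Finset.sum_eq_zero fun k _ => ?_
    rw [comm_term, key_f, mulF_zero, zeroE_mul p A (Dop p A (Sum.inr k))]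
  · -- [P, ∂_z^J] = 0
    rw [hPdef, dzJ, Finset.mul_sum, Finset.sum_mul, ← sumE_sub p A]
    refine Finset.sum_eq_zero fun j _ => ?_
    rw [expand, comm_term, comm_term, key_f, key_f, mulF_zero,
      zeroE_mul p A (Dop p A (Sum.inl (idx1 j))), zeroE_mul p A (Dop p A (Sum.inl (idx0 j)))]
    abel
  · -- [P, ∂_z†^J] = ∂_z†
    rw [hPdef, dzdJ, Finset.mul_sum, Finset.sum_mul, ← sumE_sub p A]
    have e4 : ∀ j : Fin p,
        mulF p A Pa * (mulF p A (fd (idx0 j)) * Dop p A (Sum.inr (idx1 j))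
            - mulF p A (fd (idx1 j)) * Dop p A (Sum.inr (idx0 j)))
          - (mulF p A (fd (idx0 j)) * Dop p A (Sum.inr (idx1 j))
            - mulF p A (fd (idx1 j)) * Dop p A (Sum.inr (idx0 j))) * mulF p A Pa
        = mulF p A (f (idx1 j)) * Dop p A (Sum.inr (idx1 j))
          + mulF p A (f (idx0 j)) * Dop p A (Sum.inr (idx0 j)) := by
      intro j
      rw [expand, comm_term, comm_term, key0, key1, mulF_neg,
        negE_mul p A (mulF p A (f (idx0 j))) (Dop p A (Sum.inr (idx0 j))),
        subE_negE p A (mulF p A (f (idx1 j)) * Dop p A (Sum.inr (idx1 j)))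
          (mulF p A (f (idx0 j)) * Dop p A (Sum.inr (idx0 j)))]
    simp only [e4]
    rw [dzd, sum_split p (fun k => mulF p A (f k) * Dop p A (Sum.inr k))]
    exact Finset.sum_congr rfl fun j _ => add_comm _ _
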